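/- The rings R₁ = ℤ₄[x]/⟨x²+2⟩ and R₂ = ℤ₄[x]/⟨x²+2x+2⟩ are not isomorphic as rings, even though both have 16 elements and additive groups isomorphic to ℤ₄ ⊕ ℤ₄. -/

import Mathlib

open Polynomial

def F : Type := ZMod 4 × ZMod 4

def fadd (a b : ZMod 4 × ZMod 4) : ZMod 4 × ZMod 4 := (a.1 + b.1, a.2 + b.2)
def fneg (a : ZMod 4 × ZMod 4) : ZMod 4 × ZMod 4 := (-a.1, -a.2)
def fmul (a b : ZMod 4 × ZMod 4) : ZMod 4 × ZMod 4 :=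
  (a.1 * b.1 - 2 * a.2 * b.2, a.1 * b.2 + a.2 * b.1 - 2 * a.2 * b.2)

instance : DecidableEq F := inferInstanceAs (DecidableEq (ZMod 4 × ZMod 4))
instance : Fintype F := inferInstanceAs (Fintype (ZMod 4 × ZMod 4))
instance : Zero F := ⟨((0, 0) : ZMod 4 × ZMod 4)⟩
instance : One F := ⟨((1, 0) : ZMod 4 × ZMod 4)⟩
instance : Add F := ⟨fadd⟩
instance : Neg F := ⟨fneg⟩
instance : Mul F := ⟨fmul⟩

instance : CommRing F where
  add_assoc a b c := by
    show fadd (fadd a b) c = fadd a (fadd b c)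
    refine Prod.ext ?_ ?_ <;> simp [fadd] <;> ring
  zero_add a := by
    show fadd (0, 0) a = a
    refine Prod.ext ?_ ?_ <;> simp [fadd]
  add_zero a := by
    show fadd a (0, 0) = a
    refine Prod.ext ?_ ?_ <;> simp [fadd]
  add_comm a b := by
    show fadd a b = fadd b a
    refine Prod.ext ?_ ?_ <;> simp [fadd] <;> ring
  neg_add_cancel a := by
    show fadd (fneg a) a = (0, 0)
    refine Prod.ext ?_ ?_ <;> simp [fadd, fneg]
  mul_assoc a b c := by
    show fmul (fmul a b) c = fmul a (fmul b c)
    refine Prod.ext ?_ ?_ <;> simp [fmul] <;> ring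
  one_mul a := by
    show fmul (1, 0) a = a
    refine Prod.ext ?_ ?_ <;> simp [fmul]
  mul_one a := by
    show fmul a (1, 0) = a
    refine Prod.ext ?_ ?_ <;> simp [fmul]
  left_distrib a b c := by
    show fmul a (fadd b c) = fadd (fmul a b) (fmul a c)
    refine Prod.ext ?_ ?_ <;> simp [fmul, fadd] <;> ring
  right_distrib a b c := by
    show fmul (fadd a b) c = fadd (fmul a c) (fmul b c)
    refine Prod.ext ?_ ?_ <;> simp [fmul, fadd] <;> ring
  zero_mul a := by
    show fmul (0, 0) a = (0, 0)
    refine Prod.ext ?_ ?_ <;> simp [fmul]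
  mul_zero a := by
    show fmul a (0, 0) = (0, 0)
    refine Prod.ext ?_ ?_ <;> simp [fmul]
  mul_comm a b := by
    show fmul a b = fmul b a
    refine Prod.ext ?_ ?_ <;> simp [fmul] <;> ring
  nsmul := nsmulRec
  zsmul := zsmulRec

def ψ : ZMod 4 →+* F where
  toFun a := ((a, 0) : ZMod 4 × ZMod 4)
  map_one' := rfl
  map_mul' a b := by
    show ((a * b, 0) : ZMod 4 × ZMod 4) = fmul (a, 0) (b, 0)
    simp [fmul]
  map_zero' := rfl
  map_add' a b := by
    show ((a + b, 0) : ZMod 4 × ZMod 4) = fadd (a, 0) (b, 0)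
    simp [fadd]

def φ₀ : (ZMod 4)[X] →+* F := eval₂RingHom ψ (((0, 1) : ZMod 4 × ZMod 4) : F)

theorem hker : Ideal.span {(X ^ 2 + 2 * X + 2 : (ZMod 4)[X])} ≤ RingHom.ker φ₀ := by
  rw [Ideal.span_le, Set.singleton_subset_iff]
  show φ₀ (X ^ 2 + 2 * X + 2) = 0
  have hX : φ₀ X = (((0, 1) : ZMod 4 × ZMod 4) : F) := eval₂_X _ _
  simp only [map_add, map_mul, map_pow, map_ofNat, hX]
  decide

noncomputable def φ : ((ZMod 4)[X] ⧸ Ideal.span {(X ^ 2 + 2 * X + 2 : (ZMod 4)[X])}) →+* F :=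
  Ideal.Quotient.lift _ φ₀ (fun a ha => hker ha)

theorem no_sqrt_two : ∀ w : F, w * w ≠ 2 := by decide

noncomputable def myBasis {f : (ZMod 4)[X]} (hm : f.Monic) (hd : f.natDegree = 2) :
    Module.Basis (Fin 2) (ZMod 4) (AdjoinRoot f) :=
  ((AdjoinRoot.powerBasis' hm).basis).reindex (finCongr (by rw [AdjoinRoot.powerBasis'_dim, hd]))

noncomputable def myAddEquiv {f : (ZMod 4)[X]} (hm : f.Monic) (hd : f.natDegree = 2) :
    AdjoinRoot f ≃+ ZMod 4 × ZMod 4 :=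
  ((myBasis hm hd).equivFun.trans (LinearEquiv.finTwoArrow (ZMod 4) (ZMod 4))).toAddEquiv

theorem myCard {f : (ZMod 4)[X]} (hm : f.Monic) (hd : f.natDegree = 2) :
    Nat.card (AdjoinRoot f) = 16 := by
  rw [Nat.card_congr (myAddEquiv hm hd).toEquiv]
  simp [Nat.card_eq_fintype_card]

theorem sq_in_R1 :
    (Ideal.Quotient.mk (Ideal.span {(X ^ 2 + 2 : (ZMod 4)[X])}) X) *
    (Ideal.Quotient.mk (Ideal.span {(X ^ 2 + 2 : (ZMod 4)[X])}) X) = 2 := by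
  have h0 : (Ideal.Quotient.mk (Ideal.span {(X ^ 2 + 2 : (ZMod 4)[X])}) (X ^ 2 + 2)) = 0 :=
    Ideal.Quotient.eq_zero_iff_mem.mpr (Ideal.subset_span rfl)
  have h4 : ((4 : (ZMod 4)[X])) = 0 := by
    have := CharP.cast_eq_zero ((ZMod 4)[X]) 4
    exact_mod_cast this
  have : (X * X : (ZMod 4)[X]) = (X ^ 2 + 2) + 2 := by
    have h : ((X ^ 2 + 2) + 2 : (ZMod 4)[X]) = X * X + 4 := by ring
    rw [h, h4, add_zero]
  rw [← map_mul, this, map_add, h0, zero_add, map_ofNat]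

theorem R1_R2_not_isomorphic :
    letI R1 := (ZMod 4)[X] ⧸ Ideal.span {(X ^ 2 + 2 : (ZMod 4)[X])}
    letI R2 := (ZMod 4)[X] ⧸ Ideal.span {(X ^ 2 + 2 * X + 2 : (ZMod 4)[X])}
    IsEmpty (R1 ≃+* R2) ∧
    Nat.card R1 = 16 ∧ Nat.card R2 = 16 ∧
    Nonempty (R1 ≃+ (ZMod 4 × ZMod 4)) ∧ Nonempty (R2 ≃+ (ZMod 4 × ZMod 4)) := by
  refine ⟨⟨fun e => ?_⟩, myCard (by monicity!) (by compute_degree!),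
    myCard (by monicity!) (by compute_degree!),
    ⟨myAddEquiv (by monicity!) (by compute_degree!)⟩,
    ⟨myAddEquiv (by monicity!) (by compute_degree!)⟩⟩
  set z := Ideal.Quotient.mk (Ideal.span {(X ^ 2 + 2 : (ZMod 4)[X])}) X
  exact no_sqrt_two (φ (e z)) (by rw [← map_mul, ← map_mul, sq_in_R1, map_ofNat, map_ofNat])
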